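/- arXiv:1706.02177 — 7 statements merged into one kernel-verified Lean document; each statement's English description precedes it below -/
import Mathlib

section
/- Suppose 1 ≤ i ≤ k and c, d are positive integers with c·a_i = d·a_k and c > d (such c, d exist for every i < k since a_i < a_k). Then B_{ik}^c = 0 and C_{ik}^c = 0. (This is the paper's Lemma 3.2: A_{i(2k-1)}^{c_i} = A_{i(2k)}^{c_i} = 0, obtained by comparing the coefficients of χ_{c·a_k} and χ_{-c·a_k} on both sides of α(χ_{a_i})^c = α(χ_{a_k})^d.) -/
/-- The character `χ_n : 𝕋 → ℂ`, `χ_n z = z ^ n`, as a continuous map on the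
circle group `𝕋 = {z ∈ ℂ : |z| = 1}`. -/
noncomputable def chi (n : ℤ) : C(Circle, ℂ) :=
  { toFun := fun z => ((z ^ n : Circle) : ℂ)
    continuous_toFun := by
      exact continuous_induced_dom.comp (continuous_zpow n) }

namespace StmtAux

lemma circle_coe_zpow (z : Circle) (n : ℤ) : ((z ^ n : Circle) : ℂ) = (z : ℂ) ^ n := by
  cases n with
  | ofNat m => simpa using map_pow Circle.coeHom z m
  | negSucc m =>
      rw [zpow_negSucc, zpow_negSucc, Circle.coe_inv]
      exact congrArg Inv.inv (map_pow Circle.coeHom z (m+1))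

lemma chi_pow (n : ℤ) (m : ℕ) : chi n ^ m = chi ((m : ℤ) * n) := by
  ext z
  show (chi n z) ^ m = chi ((m : ℤ) * n) z
  simp only [chi, ContinuousMap.coe_mk, circle_coe_zpow]
  rw [← zpow_natCast ((z:ℂ) ^ n) m, ← zpow_mul, mul_comm]

section Coeffs
variable {Q : Type*} [Ring Q]

lemma mem_le {p : AddMonoidAlgebra Q ℤ} {M a : ℤ} (hp : ∀ n, M < n → p.coeff n = 0)
    (ha : a ∈ p.coeff.support) : a ≤ M :=
  le_of_not_gt fun h => Finsupp.mem_support_iff.mp ha (hp a h)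

lemma mem_ge {p : AddMonoidAlgebra Q ℤ} {M a : ℤ} (hp : ∀ n, n < M → p.coeff n = 0)
    (ha : a ∈ p.coeff.support) : M ≤ a :=
  le_of_not_gt fun h => Finsupp.mem_support_iff.mp ha (hp a h)

lemma mul_bound_top (p q : AddMonoidAlgebra Q ℤ) {M N : ℤ}
    (hp : ∀ n, M < n → p.coeff n = 0) (hq : ∀ n, N < n → q.coeff n = 0)
    {x : ℤ} (hx : M + N < x) : (p * q).coeff x = 0 := by
  classical
  simp only [AddMonoidAlgebra.coeff_mul, Finsupp.sum]
  refine Finset.sum_eq_zero fun a ha => Finset.sum_eq_zero fun b hb => ?_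
  have ha' := mem_le hp ha
  have hb' := mem_le hq hb
  exact if_neg (by omega)

lemma mul_bound_bot (p q : AddMonoidAlgebra Q ℤ) {M N : ℤ}
    (hp : ∀ n, n < M → p.coeff n = 0) (hq : ∀ n, n < N → q.coeff n = 0)
    {x : ℤ} (hx : x < M + N) : (p * q).coeff x = 0 := by
  classical
  simp only [AddMonoidAlgebra.coeff_mul, Finsupp.sum]
  refine Finset.sum_eq_zero fun a ha => Finset.sum_eq_zero fun b hb => ?_
  have ha' := mem_ge hp ha
  have hb' := mem_ge hq hb
  exact if_neg (by omega)

lemma mul_apply_top (p q : AddMonoidAlgebra Q ℤ) {M N : ℤ}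
    (hp : ∀ n, M < n → p.coeff n = 0) (hq : ∀ n, N < n → q.coeff n = 0) :
    (p * q).coeff (M + N) = p.coeff M * q.coeff N := by
  classical
  simp only [AddMonoidAlgebra.coeff_mul, Finsupp.sum]
  calc (∑ a ∈ p.coeff.support, ∑ b ∈ q.coeff.support, if a + b = M + N then p.coeff a * q.coeff b else 0)
      = ∑ a ∈ p.coeff.support, ∑ b ∈ q.coeff.support,
          (if b = N then (if a = M then p.coeff M * q.coeff N else 0) else 0) := by
        refine Finset.sum_congr rfl fun a ha => Finset.sum_congr rfl fun b hb => ?_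
        have ha' := mem_le hp ha
        have hb' := mem_le hq hb
        by_cases h2 : b = N
        · subst h2
          by_cases h1 : a = M
          · subst h1; simp
          · have : a < M := lt_of_le_of_ne ha' h1
            rw [if_neg (by omega), if_pos rfl, if_neg h1]
        · have : b < N := lt_of_le_of_ne hb' h2
          rw [if_neg (by omega), if_neg h2]
    _ = ∑ a ∈ p.coeff.support, (if N ∈ q.coeff.support then (if a = M then p.coeff M * q.coeff N else 0) else 0) := by
        refine Finset.sum_congr rfl fun a _ => ?_
        exact Finset.sum_ite_eq' q.coeff.support N (fun _ => if a = M then p.coeff M * q.coeff N else 0)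
    _ = p.coeff M * q.coeff N := by
        by_cases hN' : N ∈ q.coeff.support
        · simp only [if_pos hN']
          rw [Finset.sum_ite_eq' p.coeff.support M (fun _ => p.coeff M * q.coeff N)]
          by_cases hM' : M ∈ p.coeff.support
          · rw [if_pos hM']
          · rw [if_neg hM', Finsupp.notMem_support_iff.mp hM', zero_mul]
        · simp only [if_neg hN']
          rw [Finset.sum_const_zero, Finsupp.notMem_support_iff.mp hN', mul_zero]

lemma mul_apply_bot (p q : AddMonoidAlgebra Q ℤ) {M N : ℤ}
    (hp : ∀ n, n < M → p.coeff n = 0) (hq : ∀ n, n < N → q.coeff n = 0) :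
    (p * q).coeff (M + N) = p.coeff M * q.coeff N := by
  classical
  simp only [AddMonoidAlgebra.coeff_mul, Finsupp.sum]
  calc (∑ a ∈ p.coeff.support, ∑ b ∈ q.coeff.support, if a + b = M + N then p.coeff a * q.coeff b else 0)
      = ∑ a ∈ p.coeff.support, ∑ b ∈ q.coeff.support,
          (if b = N then (if a = M then p.coeff M * q.coeff N else 0) else 0) := by
        refine Finset.sum_congr rfl fun a ha => Finset.sum_congr rfl fun b hb => ?_
        have ha' := mem_ge hp ha
        have hb' := mem_ge hq hb
        by_cases h2 : b = N
        · subst h2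
          by_cases h1 : a = M
          · subst h1; simp
          · have : M < a := lt_of_le_of_ne ha' (Ne.symm h1)
            rw [if_neg (by omega), if_pos rfl, if_neg h1]
        · have : N < b := lt_of_le_of_ne hb' (Ne.symm h2)
          rw [if_neg (by omega), if_neg h2]
    _ = ∑ a ∈ p.coeff.support, (if N ∈ q.coeff.support then (if a = M then p.coeff M * q.coeff N else 0) else 0) := by
        refine Finset.sum_congr rfl fun a _ => ?_
        exact Finset.sum_ite_eq' q.coeff.support N (fun _ => if a = M then p.coeff M * q.coeff N else 0)
    _ = p.coeff M * q.coeff N := by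
        by_cases hN' : N ∈ q.coeff.support
        · simp only [if_pos hN']
          rw [Finset.sum_ite_eq' p.coeff.support M (fun _ => p.coeff M * q.coeff N)]
          by_cases hM' : M ∈ p.coeff.support
          · rw [if_pos hM']
          · rw [if_neg hM', Finsupp.notMem_support_iff.mp hM', zero_mul]
        · simp only [if_neg hN']
          rw [Finset.sum_const_zero, Finsupp.notMem_support_iff.mp hN', mul_zero]

lemma pow_bound_top (p : AddMonoidAlgebra Q ℤ) {M : ℤ} (hp : ∀ n, M < n → p.coeff n = 0) :
    ∀ (c : ℕ) (n : ℤ), (c : ℤ) * M < n → (p ^ c).coeff n = 0 := by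
  intro c
  induction c with
  | zero =>
      intro n hn
      rw [pow_zero, AddMonoidAlgebra.one_def, AddMonoidAlgebra.coeff_single, Finsupp.single_apply,
        if_neg (by push_cast at hn; omega)]
  | succ m ih =>
      intro n hn
      have h : ((m : ℤ) * M) + M < n := by push_cast at hn; linarith
      rw [pow_succ]
      exact mul_bound_top _ _ ih hp h

lemma pow_bound_bot (p : AddMonoidAlgebra Q ℤ) {M : ℤ} (hp : ∀ n, n < M → p.coeff n = 0) :
    ∀ (c : ℕ) (n : ℤ), n < (c : ℤ) * M → (p ^ c).coeff n = 0 := by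
  intro c
  induction c with
  | zero =>
      intro n hn
      rw [pow_zero, AddMonoidAlgebra.one_def, AddMonoidAlgebra.coeff_single, Finsupp.single_apply,
        if_neg (by push_cast at hn; omega)]
  | succ m ih =>
      intro n hn
      have h : n < ((m : ℤ) * M) + M := by push_cast at hn; linarith
      rw [pow_succ]
      exact mul_bound_bot _ _ ih hp h

lemma pow_apply_top (p : AddMonoidAlgebra Q ℤ) {M : ℤ} (hp : ∀ n, M < n → p.coeff n = 0) :
    ∀ c : ℕ, (p ^ c).coeff ((c : ℤ) * M) = p.coeff M ^ c := by
  intro c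
  induction c with
  | zero =>
      rw [pow_zero, pow_zero, AddMonoidAlgebra.one_def, Nat.cast_zero, zero_mul,
        AddMonoidAlgebra.coeff_single, Finsupp.single_apply, if_pos rfl]
  | succ m ih =>
      have h : ((m + 1 : ℕ) : ℤ) * M = (m : ℤ) * M + M := by push_cast; ring
      rw [h, pow_succ, mul_apply_top _ _ (pow_bound_top p hp m) hp, ih, pow_succ]

lemma pow_apply_bot (p : AddMonoidAlgebra Q ℤ) {M : ℤ} (hp : ∀ n, n < M → p.coeff n = 0) :
    ∀ c : ℕ, (p ^ c).coeff ((c : ℤ) * M) = p.coeff M ^ c := by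
  intro c
  induction c with
  | zero =>
      rw [pow_zero, pow_zero, AddMonoidAlgebra.one_def, Nat.cast_zero, zero_mul,
        AddMonoidAlgebra.coeff_single, Finsupp.single_apply, if_pos rfl]
  | succ m ih =>
      have h : ((m + 1 : ℕ) : ℤ) * M = (m : ℤ) * M + M := by push_cast; ring
      rw [h, pow_succ, mul_apply_bot _ _ (pow_bound_bot p hp m) hp, ih, pow_succ]

end Coeffs

section Ev
variable (Q : Type*) [NormedRing Q] [NormedAlgebra ℂ Q]

noncomputable def charQ : Multiplicative ℤ →* C(Circle, Q) where
  toFun m := ⟨fun z => chi (Multiplicative.toAdd m) z • (1 : Q),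
    (map_continuous (chi _)).smul continuous_const⟩
  map_one' := by
    ext z
    simp [chi]
  map_mul' m₁ m₂ := by
    ext z
    simp only [ContinuousMap.coe_mk, ContinuousMap.mul_apply, chi, toAdd_mul]
    rw [zpow_add, smul_mul_smul_comm, one_mul, Circle.coe_mul]

noncomputable def constRH : Q →+* C(Circle, Q) where
  toFun q := ContinuousMap.const _ q
  map_one' := rfl
  map_mul' _ _ := rfl
  map_zero' := rfl
  map_add' _ _ := rfl

lemma comm_constRH_charQ : ∀ (q : Q) (m : Multiplicative ℤ),
    Commute (constRH Q q) (charQ Q m) := by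
  intro q m
  ext z
  show q * (chi _ z • 1) = (chi _ z • 1) * q
  rw [mul_smul_comm, smul_mul_assoc, mul_one, one_mul]

noncomputable def ev : AddMonoidAlgebra Q ℤ →+* C(Circle, Q) :=
  AddMonoidAlgebra.liftNCRingHom (constRH Q) (charQ Q) (comm_constRH_charQ Q)

lemma ev_single (n : ℤ) (q : Q) (z : Circle) :
    ev Q (AddMonoidAlgebra.single n q) z = chi n z • q := by
  have h1 : ev Q (AddMonoidAlgebra.single n q)
      = constRH Q q * charQ Q (Multiplicative.ofAdd n) :=
    AddMonoidAlgebra.liftNC_single ((constRH Q) : Q →+ C(Circle, Q)) (⇑(charQ Q)) n q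
  rw [h1]
  show q * (chi n z • 1) = chi n z • q
  rw [mul_smul_comm, mul_one]

lemma ev_apply (p : AddMonoidAlgebra Q ℤ) (z : Circle) :
    ev Q p z = p.coeff.sum fun n q => chi n z • q := by
  induction p using AddMonoidAlgebra.induction_linear with
  | zero => simp
  | add f g hf hg =>
      rw [map_add, ContinuousMap.add_apply, hf, hg, AddMonoidAlgebra.coeff_add,
        Finsupp.sum_add_index (fun n _ => smul_zero _) (fun n _ q r => smul_add _ q r)]
  | single n q =>
      rw [ev_single, AddMonoidAlgebra.coeff_single, Finsupp.sum_single_index]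
      exact smul_zero _

lemma coeffs_eq_zero (p : AddMonoidAlgebra Q ℤ)
    (h : ∀ z : Circle, (p.coeff.sum fun n q => chi n z • q) = 0) : p = 0 := by
  classical
  ext n
  show p.coeff n = 0
  by_cases hn : n ∈ p.coeff.support
  swap
  · exact Finsupp.notMem_support_iff.mp hn
  refine NormedSpace.eq_zero_of_forall_dual_eq_zero ℂ fun φ => ?_
  set χm : ℤ → (Circle →* ℂ) := fun m =>
    { toFun := fun z => chi m z
      map_one' := by simp [chi]
      map_mul' := fun x y => by
        simp only [chi, ContinuousMap.coe_mk]; rw [mul_zpow, Circle.coe_mul] }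
    with hχ
  have hinj : Function.Injective χm := by
    intro m₁ m₂ h12
    by_contra hne
    have h1 : ∀ z : Circle, z ^ m₁ = z ^ m₂ := fun z => Circle.coe_injective (by
      have := DFunLike.congr_fun h12 z
      simpa [hχ, chi] using this)
    set t : ℝ := Real.pi / ((m₁ : ℝ) - (m₂ : ℝ)) with ht
    have hsub : ((m₁ : ℝ) - (m₂ : ℝ)) ≠ 0 := by
      simpa [sub_eq_zero] using fun hh => hne (by exact_mod_cast hh)
    have h2 : Circle.exp t ^ (m₁ - m₂) = 1 := by
      rw [zpow_sub, h1 (Circle.exp t)]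
      simp
    have h3 : Circle.exp t ^ (m₁ - m₂) = Circle.exp (((m₁ - m₂ : ℤ) : ℝ) * t) := by
      have := Circle.exp_zsmul t (m₁ - m₂)
      simpa [zsmul_eq_mul] using this.symm
    have h4 : ((m₁ - m₂ : ℤ) : ℝ) * t = Real.pi := by
      rw [ht]
      push_cast
      field_simp
    rw [h3, h4, Circle.exp_eq_one] at h2
    obtain ⟨j, hj⟩ := h2
    have h6 : (1 : ℝ) * Real.pi = ((j : ℝ) * 2) * Real.pi := by
      rw [one_mul]; linear_combination hj
    have h7 : (1 : ℝ) = (j : ℝ) * 2 := mul_right_cancel₀ Real.pi_ne_zero h6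
    have h8 : (1 : ℤ) = j * 2 := by exact_mod_cast h7
    omega
  have hLI := (linearIndependent_monoidHom Circle ℂ).comp χm hinj
  rw [linearIndependent_iff'] at hLI
  refine hLI p.coeff.support (fun m => φ (p.coeff m)) ?_ n hn
  funext z
  have h0 : ∑ m ∈ p.coeff.support, chi m z • φ (p.coeff m) = 0 := by
    have h5 := congrArg φ (h z)
    rw [map_zero, Finsupp.sum, map_sum] at h5
    simpa [map_smul] using h5
  rw [Finset.sum_apply]
  simp only [Pi.smul_apply, Function.comp_apply, Pi.zero_apply]
  calc (∑ m ∈ p.coeff.support, φ (p.coeff m) • (χm m) z)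
      = ∑ m ∈ p.coeff.support, chi m z • φ (p.coeff m) := by
        refine Finset.sum_congr rfl fun m _ => ?_
        show φ (p.coeff m) • chi m z = chi m z • φ (p.coeff m)
        rw [smul_eq_mul, smul_eq_mul, mul_comm]
    _ = 0 := h0

end Ev

end StmtAux

open StmtAux

theorem stmt_0 {k : ℕ} (a : Fin (k + 1) → ℤ)
    (ha_pos : ∀ i, 0 < a i) (ha_mono : StrictMono a)
    (Q : Type*) [NormedRing Q] [StarRing Q] [CStarRing Q]
    [NormedAlgebra ℂ Q] [StarModule ℂ Q] [CompleteSpace Q]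
    (α : C(Circle, ℂ) →⋆ₐ[ℂ] C(Circle, Q))
    (B C : Fin (k + 1) → Fin (k + 1) → Q)
    (hα : ∀ i, ∀ z : Circle,
      α (chi (a i)) z
        = ∑ j, ((z ^ (a j) : Circle) : ℂ) • B i j
          + ∑ j, ((z ^ (-(a j)) : Circle) : ℂ) • C i j)
    (i : Fin (k + 1)) (c d : ℕ) (hc : 0 < c) (hd : 0 < d) (hdc : d < c)
    (hcd : (c : ℤ) * a i = (d : ℤ) * a (Fin.last k)) :
    B i (Fin.last k) ^ c = 0 ∧ C i (Fin.last k) ^ c = 0 := by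
  classical
  let K : Fin (k + 1) := Fin.last k
  let P : Fin (k + 1) → AddMonoidAlgebra Q ℤ := fun r =>
    (∑ j, AddMonoidAlgebra.single (a j) (B r j)) + ∑ j, AddMonoidAlgebra.single (-(a j)) (C r j)
  have hPapp : ∀ r n, (P r).coeff n =
      (∑ j, if a j = n then B r j else 0) + (∑ j, if -(a j) = n then C r j else 0) := by
    intro r n
    show ((∑ j, AddMonoidAlgebra.single (a j) (B r j)) + ∑ j, AddMonoidAlgebra.single (-(a j)) (C r j)).coeff n = _
    rw [AddMonoidAlgebra.coeff_add, AddMonoidAlgebra.coeff_sum, AddMonoidAlgebra.coeff_sum, Finsupp.add_apply, Finsupp.finset_sum_apply, Finsupp.finset_sum_apply]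
    simp only [AddMonoidAlgebra.coeff_single, Finsupp.single_apply]
  have haK : ∀ j, a j ≤ a K := fun j => ha_mono.monotone (Fin.le_last j)
  have haK0 : 0 < a K := ha_pos K
  have hPtop : ∀ r n, a K < n → (P r).coeff n = 0 := by
    intro r n hn
    rw [hPapp]
    have h1 : (∑ j, if a j = n then B r j else 0) = 0 :=
      Finset.sum_eq_zero fun j _ => if_neg (by have := haK j; omega)
    have h2 : (∑ j, if -(a j) = n then C r j else 0) = 0 :=
      Finset.sum_eq_zero fun j _ => if_neg (by have := ha_pos j; omega)
    rw [h1, h2, add_zero]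
  have hPbot : ∀ r n, n < -(a K) → (P r).coeff n = 0 := by
    intro r n hn
    rw [hPapp]
    have h1 : (∑ j, if a j = n then B r j else 0) = 0 :=
      Finset.sum_eq_zero fun j _ => if_neg (by have := ha_pos j; omega)
    have h2 : (∑ j, if -(a j) = n then C r j else 0) = 0 :=
      Finset.sum_eq_zero fun j _ => if_neg (by have := haK j; omega)
    rw [h1, h2, add_zero]
  have hPtopc : ∀ r, (P r).coeff (a K) = B r K := by
    intro r
    rw [hPapp]
    have h1 : (∑ j, if a j = a K then B r j else 0) = B r K := by
      rw [Finset.sum_eq_single K]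
      · rw [if_pos rfl]
      · intro j _ hj
        exact if_neg fun h => hj (ha_mono.injective h)
      · intro h
        exact absurd (Finset.mem_univ K) h
    have h2 : (∑ j, if -(a j) = a K then C r j else 0) = 0 :=
      Finset.sum_eq_zero fun j _ => if_neg (by have := ha_pos j; omega)
    rw [h1, h2, add_zero]
  have hPbotc : ∀ r, (P r).coeff (-(a K)) = C r K := by
    intro r
    rw [hPapp]
    have h1 : (∑ j, if a j = -(a K) then B r j else 0) = 0 :=
      Finset.sum_eq_zero fun j _ => if_neg (by have := ha_pos j; omega)
    have h2 : (∑ j, if -(a j) = -(a K) then C r j else 0) = C r K := by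
      rw [Finset.sum_eq_single K]
      · rw [if_pos rfl]
      · intro j _ hj
        exact if_neg fun h => hj (ha_mono.injective (neg_injective h))
      · intro h
        exact absurd (Finset.mem_univ K) h
    rw [h1, h2, zero_add]
  have hev : ∀ r, ev Q (P r) = α (chi (a r)) := by
    intro r
    ext z
    show ev Q ((∑ j, AddMonoidAlgebra.single (a j) (B r j))
        + ∑ j, AddMonoidAlgebra.single (-(a j)) (C r j)) z = _
    rw [map_add, map_sum, map_sum, ContinuousMap.add_apply,
      ContinuousMap.sum_apply, ContinuousMap.sum_apply, hα r z]
    congr 1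
    · exact Finset.sum_congr rfl fun j _ => ev_single Q (a j) (B r j) z
    · exact Finset.sum_congr rfl fun j _ => ev_single Q (-(a j)) (C r j) z
  have hpoweq : P i ^ c = P K ^ d := by
    have h0 : ev Q (P i ^ c - P K ^ d) = 0 := by
      rw [map_sub, map_pow, map_pow, hev i, hev K, ← map_pow α, ← map_pow α,
        chi_pow, chi_pow, hcd, sub_self]
    have h1 : P i ^ c - P K ^ d = 0 := by
      refine coeffs_eq_zero Q _ fun z => ?_
      rw [← ev_apply, h0]
      rfl
    exact sub_eq_zero.mp h1
  have hdc' : (d : ℤ) < (c : ℤ) := by exact_mod_cast hdc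
  constructor
  · have h1 := pow_apply_top (P i) (hPtop i) c
    rw [hPtopc] at h1
    have h2 : (P K ^ d).coeff ((c : ℤ) * a K) = 0 :=
      pow_bound_top (P K) (hPtop K) d _ (mul_lt_mul_of_pos_right hdc' haK0)
    rw [← h1, hpoweq]
    exact h2
  · have h1 := pow_apply_bot (P i) (hPbot i) c
    rw [hPbotc] at h1
    have h2 : (P K ^ d).coeff ((c : ℤ) * -(a K)) = 0 :=
      pow_bound_bot (P K) (hPbot K) d _
        (mul_lt_mul_of_neg_right hdc' (neg_lt_zero.mpr haK0))
    rw [← h1, hpoweq]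
    exact h2
end

section
/- If p, q, l, m ∈ {1, …, k} satisfy a_p + a_q = a_l + a_m, then B_{pk}·B_{qk} = B_{lk}·B_{mk}. (This is the pre-antipode form of the paper's Lemma 3.3, obtained by comparing the coefficient of χ_{2a_k} on both sides of α(χ_{a_p})·α(χ_{a_q}) = α(χ_{a_l})·α(χ_{a_m}).) -/
lemma circle_coe_zpow (z : Circle) (n : ℤ) : ((z ^ n : Circle) : ℂ) = (z : ℂ) ^ n := by
  have h := map_zpow Circle.toUnits z n
  have := congrArg Units.val h
  simpa [Units.val_zpow_eq_zpow_val] using this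

lemma circle_char_inj :
    Function.Injective (fun n : ℤ => (Circle.coeHom.comp (zpowGroupHom n) : Circle →* ℂ)) := by
  intro n' m' hnm
  by_contra hne
  set d : ℤ := n' - m' with hd
  have hd0 : d ≠ 0 := sub_ne_zero.2 hne
  have hdR : (d : ℝ) ≠ 0 := Int.cast_ne_zero.2 hd0
  set z : Circle := Circle.exp (Real.pi / (d : ℝ)) with hz
  have h1 : ((z ^ n' : Circle) : ℂ) = ((z ^ m' : Circle) : ℂ) := by
    have := congrArg (fun f : Circle →* ℂ => f z) hnm
    exact this
  rw [circle_coe_zpow, circle_coe_zpow] at h1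
  have hz0 : (z : ℂ) ≠ 0 := z.coe_ne_zero
  have h2 : (z : ℂ) ^ d = 1 := by
    rw [hd, zpow_sub₀ hz0, h1, div_self (zpow_ne_zero _ hz0)]
  have h3 : (z : ℂ) ^ d = -1 := by
    have hc : (z : ℂ) = Complex.exp ((Real.pi / (d : ℝ) : ℝ) * Complex.I) := by
      rw [hz, Circle.coe_exp]
    rw [hc, ← Complex.exp_int_mul]
    have : (d : ℂ) * ((Real.pi / (d : ℝ) : ℝ) * Complex.I) = Real.pi * Complex.I := by
      have hdC : (d : ℂ) ≠ 0 := by exact_mod_cast hd0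
      push_cast
      rw [div_mul_eq_mul_div, mul_div_assoc']
      exact mul_div_cancel_left₀ _ hdC
    rw [this, Complex.exp_pi_mul_I]
  rw [h2] at h3
  norm_num at h3

lemma circle_chars_li :
    LinearIndependent ℂ (fun n : ℤ => fun z : Circle => ((z ^ n : Circle) : ℂ)) := by
  have h := (linearIndependent_monoidHom Circle ℂ).comp
    (fun n : ℤ => (Circle.coeHom.comp (zpowGroupHom n) : Circle →* ℂ)) circle_char_inj
  convert h using 2
  · rfl
  · rfl

lemma sum_char_eq_zero {s : Finset ℤ} {c : ℤ → ℂ}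
    (h : ∀ z : Circle, ∑ N ∈ s, c N * ((z ^ N : Circle) : ℂ) = 0) :
    ∀ N ∈ s, c N = 0 := by
  refine linearIndependent_iff'.mp circle_chars_li s c ?_
  funext z
  have := h z
  simpa [Finset.sum_apply, smul_eq_mul] using this

lemma extract_coeff {ι : Type*} [Fintype ι] [DecidableEq ι] (E : ι → ℤ) (d : ι → ℂ)
    (h : ∀ z : Circle, ∑ u, d u * ((z ^ E u : Circle) : ℂ) = 0) (N : ℤ) :
    ∑ u ∈ Finset.univ.filter (fun u => E u = N), d u = 0 := by
  classical
  set s : Finset ℤ := Finset.univ.image E with hs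
  set c : ℤ → ℂ := fun M => ∑ u ∈ Finset.univ.filter (fun u => E u = M), d u with hc
  have hfib : ∀ z : Circle, ∑ M ∈ s, c M * ((z ^ M : Circle) : ℂ) = 0 := by
    intro z
    have h1 : ∑ M ∈ s, ∑ u ∈ Finset.univ.filter (fun u => E u = M),
        (d u * ((z ^ E u : Circle) : ℂ)) = ∑ u, d u * ((z ^ E u : Circle) : ℂ) :=
      Finset.sum_fiberwise_of_maps_to (fun x _ => Finset.mem_image_of_mem E (Finset.mem_univ x)) _
    have h2 : ∀ M ∈ s, ∑ u ∈ Finset.univ.filter (fun u => E u = M),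
        (d u * ((z ^ E u : Circle) : ℂ)) = c M * ((z ^ M : Circle) : ℂ) := by
      intro M _
      rw [hc, Finset.sum_mul]
      refine Finset.sum_congr rfl fun u hu => ?_
      rw [(Finset.mem_filter.mp hu).2]
    rw [← Finset.sum_congr rfl h2, h1, h z]
  by_cases hN : N ∈ s
  · exact sum_char_eq_zero hfib N hN
  · have : Finset.univ.filter (fun u => E u = N) = ∅ := by
      refine Finset.filter_eq_empty_iff.mpr fun u _ => fun hEu => hN ?_
      exact hEu ▸ Finset.mem_image_of_mem E (Finset.mem_univ u)
    simp [this]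

theorem stmt_1 {k : ℕ} (a : Fin (k + 1) → ℤ)
    (ha_pos : ∀ i, 0 < a i) (ha_mono : StrictMono a)
    (Q : Type*) [NormedRing Q] [StarRing Q] [CStarRing Q]
    [NormedAlgebra ℂ Q] [StarModule ℂ Q] [CompleteSpace Q]
    (α : C(Circle, ℂ) →⋆ₐ[ℂ] C(Circle, Q))
    (B C : Fin (k + 1) → Fin (k + 1) → Q)
    (hα : ∀ i, ∀ z : Circle,
      α (chi (a i)) z
        = ∑ j, ((z ^ (a j) : Circle) : ℂ) • B i j
          + ∑ j, ((z ^ (-(a j)) : Circle) : ℂ) • C i j)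
    (p q l m : Fin (k + 1)) (h : a p + a q = a l + a m) :
    B p (Fin.last k) * B q (Fin.last k) = B l (Fin.last k) * B m (Fin.last k) := by
  classical
  set L : Fin (k + 1) := Fin.last k with hL
  set e : Fin (k + 1) × Bool → ℤ := fun t => if t.2 then a t.1 else -(a t.1) with he
  set X : Fin (k + 1) → Fin (k + 1) × Bool → Q :=
    fun i t => if t.2 then B i t.1 else C i t.1 with hX
  -- rewrite hα as a single sum
  have hα' : ∀ i, ∀ z : Circle,
      α (chi (a i)) z = ∑ t : Fin (k + 1) × Bool, ((z ^ e t : Circle) : ℂ) • X i t := by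
    intro i z
    rw [hα i z, Fintype.sum_prod_type]
    rw [← Finset.sum_add_distrib]
    refine Finset.sum_congr rfl fun j _ => ?_
    rw [Fintype.sum_bool]
    simp [he, hX]
  -- product equality
  have hchi : chi (a p) * chi (a q) = chi (a l) * chi (a m) := by
    ext z
    show ((z ^ a p : Circle) : ℂ) * ((z ^ a q : Circle) : ℂ)
        = ((z ^ a l : Circle) : ℂ) * ((z ^ a m : Circle) : ℂ)
    simp only [circle_coe_zpow]
    rw [← zpow_add₀ z.coe_ne_zero, ← zpow_add₀ z.coe_ne_zero, h]
  have hprod : ∀ z : Circle,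
      α (chi (a p)) z * α (chi (a q)) z = α (chi (a l)) z * α (chi (a m)) z := by
    intro z
    have : α (chi (a p)) * α (chi (a q)) = α (chi (a l)) * α (chi (a m)) := by
      rw [← map_mul, ← map_mul, hchi]
    calc α (chi (a p)) z * α (chi (a q)) z = (α (chi (a p)) * α (chi (a q))) z := rfl
      _ = (α (chi (a l)) * α (chi (a m))) z := by rw [this]
      _ = α (chi (a l)) z * α (chi (a m)) z := rfl
  -- expanded equality
  have hbig : ∀ z : Circle,
      ∑ u : (Fin (k + 1) × Bool) × (Fin (k + 1) × Bool),
        ((z ^ (e u.1 + e u.2) : Circle) : ℂ) • (X p u.1 * X q u.2)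
      = ∑ u : (Fin (k + 1) × Bool) × (Fin (k + 1) × Bool),
        ((z ^ (e u.1 + e u.2) : Circle) : ℂ) • (X l u.1 * X m u.2) := by
    intro z
    have hz := hprod z
    rw [hα' p z, hα' q z, hα' l z, hα' m z, Finset.sum_mul_sum, Finset.sum_mul_sum] at hz
    have hcoef : ∀ (t t' : Fin (k + 1) × Bool) (x y : Q),
        (((z ^ e t : Circle) : ℂ) • x) * (((z ^ e t' : Circle) : ℂ) • y)
          = ((z ^ (e t + e t') : Circle) : ℂ) • (x * y) := by
      intro t t' x y
      rw [smul_mul_smul_comm, circle_coe_zpow, circle_coe_zpow, circle_coe_zpow,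
        ← zpow_add₀ z.coe_ne_zero]
    have hexp : ∀ Y Z : Fin (k + 1) → (Fin (k + 1) × Bool) → Q, ∀ i i' : Fin (k + 1),
        ∑ u : (Fin (k + 1) × Bool) × (Fin (k + 1) × Bool),
          ((z ^ (e u.1 + e u.2) : Circle) : ℂ) • (Y i u.1 * Z i' u.2)
        = ∑ t : Fin (k + 1) × Bool, ∑ t' : Fin (k + 1) × Bool,
            (((z ^ e t : Circle) : ℂ) • Y i t) * (((z ^ e t' : Circle) : ℂ) • Z i' t') := by
      intro Y Z i i'
      rw [Fintype.sum_prod_type]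
      exact Finset.sum_congr rfl fun t _ => Finset.sum_congr rfl fun t' _ =>
        (hcoef t t' _ _).symm
    rw [hexp X X p q, hexp X X l m]
    exact hz
  -- the exponent reaches its max a L + a L only at ((L,true),(L,true))
  have he_le : ∀ t : Fin (k + 1) × Bool, e t ≤ a L := by
    intro t
    rcases t with ⟨j, b⟩
    cases b
    · simpa [he] using le_of_lt (lt_trans (neg_neg_of_pos (ha_pos j)) (ha_pos L))
    · simpa [he] using ha_mono.monotone (Fin.le_last j)
  have he_eq : ∀ t : Fin (k + 1) × Bool, e t = a L → t = (L, true) := by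
    intro t ht
    rcases t with ⟨j, b⟩
    cases b
    · exfalso
      simp only [he] at ht
      have := ha_pos j
      have := ha_pos L
      simp at ht
      omega
    · simp only [he, if_pos] at ht
      have : j = L := ha_mono.injective (by simpa using ht)
      simp [this]
  have hfilter : (Finset.univ.filter
      (fun u : (Fin (k + 1) × Bool) × (Fin (k + 1) × Bool) => e u.1 + e u.2 = a L + a L))
      = {((L, true), (L, true))} := by
    ext u
    simp only [Finset.mem_filter, Finset.mem_univ, true_and, Finset.mem_singleton]
    constructor
    · intro hu
      have h1 : e u.1 = a L := by
        have := he_le u.1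
        have := he_le u.2
        omega
      have h2 : e u.2 = a L := by
        have := he_le u.1
        omega
      have := he_eq u.1 h1
      have := he_eq u.2 h2
      exact Prod.ext ‹u.1 = (L, true)› ‹u.2 = (L, true)›
    · rintro rfl
      simp [he]
  -- dual functionals
  refine (NormedSpace.eq_iff_forall_dual_eq ℂ).2 fun φ => ?_
  have h0 : ∀ z : Circle,
      ∑ u : (Fin (k + 1) × Bool) × (Fin (k + 1) × Bool),
        (φ (X p u.1 * X q u.2) - φ (X l u.1 * X m u.2))
          * ((z ^ (e u.1 + e u.2) : Circle) : ℂ) = 0 := by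
    intro z
    have hz := congrArg φ (hbig z)
    rw [map_sum, map_sum] at hz
    simp only [map_smul, smul_eq_mul] at hz
    have : ∑ u : (Fin (k + 1) × Bool) × (Fin (k + 1) × Bool),
        (φ (X p u.1 * X q u.2) - φ (X l u.1 * X m u.2))
          * ((z ^ (e u.1 + e u.2) : Circle) : ℂ)
        = ∑ u : (Fin (k + 1) × Bool) × (Fin (k + 1) × Bool),
            (((z ^ (e u.1 + e u.2) : Circle) : ℂ) * φ (X p u.1 * X q u.2)
              - ((z ^ (e u.1 + e u.2) : Circle) : ℂ) * φ (X l u.1 * X m u.2)) := by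
      refine Finset.sum_congr rfl fun u _ => by ring
    rw [this, Finset.sum_sub_distrib, hz, sub_self]
  have hext := extract_coeff
    (fun u : (Fin (k + 1) × Bool) × (Fin (k + 1) × Bool) => e u.1 + e u.2)
    (fun u => φ (X p u.1 * X q u.2) - φ (X l u.1 * X m u.2)) h0 (a L + a L)
  rw [hfilter] at hext
  simp only [Finset.sum_singleton] at hext
  have hXB : ∀ i : Fin (k + 1), X i (L, true) = B i L := fun i => by simp [hX]
  rw [hXB, hXB, hXB, hXB] at hext
  exact sub_eq_zero.mp hext
end

section
/- If p, q, l, m ∈ {1, …, k} satisfy a_p + a_q = -a_l + a_m, then B_{pk}·B_{qk} = star(C_{lk})·B_{mk}. (This is the pre-antipode form of the paper's Lemma 3.4, obtained by comparing the coefficient of χ_{2a_k} on both sides of α(χ_{a_p})·α(χ_{a_q}) = α(χ_{-a_l})·α(χ_{a_m}).) -/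
open MeasureTheory

noncomputable instance : MeasurableSpace Circle := borel Circle
instance : BorelSpace Circle := ⟨rfl⟩

/-- Normalized Haar measure on the circle group. -/
noncomputable def circleHaar : Measure Circle := Measure.haarMeasure ⊤

instance : IsProbabilityMeasure circleHaar :=
  ⟨by rw [circleHaar,
        show (Set.univ : Set Circle) = (⊤ : TopologicalSpace.PositiveCompacts Circle) from rfl]
      exact Measure.haarMeasure_self⟩

instance : circleHaar.IsMulLeftInvariant := by unfold circleHaar; infer_instance

lemma contPow (n : ℤ) : Continuous fun z : Circle => ((z ^ n : Circle) : ℂ) :=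
  continuous_induced_dom.comp (continuous_zpow n)

lemma integral_circle_zpow (n : ℤ) :
    ∫ z : Circle, ((z ^ n : Circle) : ℂ) ∂circleHaar = if n = 0 then 1 else 0 := by
  rcases eq_or_ne n 0 with rfl | hn
  · simp
  · rw [if_neg hn]
    set w : Circle := Circle.exp (Real.pi / n) with hw
    have hwn : ((w ^ n : Circle) : ℂ) = -1 := by
      show ((w : Circle) : ℂ) ^ n = -1
      rw [hw, Circle.coe_exp, ← Complex.exp_int_mul]
      have hn' : (n : ℂ) ≠ 0 := Int.cast_ne_zero.mpr hn
      have : (n : ℂ) * (↑(Real.pi / n) * Complex.I) = Real.pi * Complex.I := by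
        push_cast; field_simp
      rw [this, Complex.exp_pi_mul_I]
    have hinv := integral_mul_left_eq_self (μ := circleHaar)
      (fun z : Circle => ((z ^ n : Circle) : ℂ)) w
    have hexp : ∀ z : Circle, (((w * z) ^ n : Circle) : ℂ)
        = -(((z ^ n : Circle) : ℂ)) := by
      intro z
      show ((w * z : Circle) : ℂ) ^ n = -(((z : Circle) : ℂ) ^ n)
      rw [Circle.coe_mul, mul_zpow]
      show (((w ^ n : Circle) : ℂ)) * _ = _
      rw [hwn]; ring
    simp only [hexp, integral_neg] at hinv
    linear_combination (-1/2 : ℂ) * hinv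

lemma key {Q : Type*} [NormedRing Q] [NormedAlgebra ℂ Q] [CompleteSpace Q]
    {ι : Type*} [Fintype ι] (n0 : ℤ) (e f : ι → ℤ) (u v : ι → Q) :
    ∫ z : Circle, ((z ^ n0 : Circle) : ℂ) •
        ((∑ i, ((z ^ e i : Circle) : ℂ) • u i) * (∑ j, ((z ^ f j : Circle) : ℂ) • v j))
        ∂circleHaar
      = ∑ i, ∑ j, (if n0 + e i + f j = 0 then (1 : ℂ) else 0) • (u i * v j) := by
  have h1 : ∀ z : Circle, ((z ^ n0 : Circle) : ℂ) •
        ((∑ i, ((z ^ e i : Circle) : ℂ) • u i) * (∑ j, ((z ^ f j : Circle) : ℂ) • v j))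
      = ∑ i, ∑ j, ((z ^ (n0 + e i + f j) : Circle) : ℂ) • (u i * v j) := by
    intro z
    rw [Finset.sum_mul_sum, Finset.smul_sum]
    refine Finset.sum_congr rfl fun i _ => ?_
    rw [Finset.smul_sum]
    refine Finset.sum_congr rfl fun j _ => ?_
    rw [smul_mul_smul_comm, smul_smul]
    congr 1
    show ((z ^ n0 : Circle) : ℂ) * (((z ^ e i * z ^ f j : Circle)) : ℂ) = _
    rw [← Circle.coe_mul, ← zpow_add, ← zpow_add, add_assoc]
  calc ∫ z : Circle, ((z ^ n0 : Circle) : ℂ) •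
        ((∑ i, ((z ^ e i : Circle) : ℂ) • u i) * (∑ j, ((z ^ f j : Circle) : ℂ) • v j))
        ∂circleHaar
      = ∫ z : Circle, ∑ i, ∑ j, ((z ^ (n0 + e i + f j) : Circle) : ℂ) • (u i * v j)
          ∂circleHaar := by simp_rw [h1]
    _ = ∑ i, ∑ j, ∫ z : Circle, ((z ^ (n0 + e i + f j) : Circle) : ℂ) • (u i * v j)
          ∂circleHaar := by
        rw [integral_finset_sum]
        · exact Finset.sum_congr rfl fun i _ => integral_finset_sum _ fun j _ =>
            (((contPow _).smul continuous_const).integrable_of_hasCompactSupport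
              (HasCompactSupport.of_compactSpace _))
        · intro i _
          exact (Continuous.integrable_of_hasCompactSupport
            (by exact continuous_finset_sum _ fun j _ => (contPow _).smul continuous_const)
            (HasCompactSupport.of_compactSpace _))
    _ = ∑ i, ∑ j, (if n0 + e i + f j = 0 then (1 : ℂ) else 0) • (u i * v j) := by
        refine Finset.sum_congr rfl fun i _ => Finset.sum_congr rfl fun j _ => ?_
        rw [integral_smul_const, integral_circle_zpow]

lemma key2 {Q : Type*} [NormedRing Q] [NormedAlgebra ℂ Q] [CompleteSpace Q]
    {ι : Type*} [Fintype ι] (n0 : ℤ) (e1 e2 f1 f2 : ι → ℤ) (u1 u2 v1 v2 : ι → Q) :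
    ∫ z : Circle, ((z ^ n0 : Circle) : ℂ) •
        ((∑ i, ((z ^ e1 i : Circle) : ℂ) • u1 i + ∑ i, ((z ^ e2 i : Circle) : ℂ) • u2 i) *
         (∑ j, ((z ^ f1 j : Circle) : ℂ) • v1 j + ∑ j, ((z ^ f2 j : Circle) : ℂ) • v2 j))
        ∂circleHaar
      = ∑ i, ∑ j, (if n0 + e1 i + f1 j = 0 then (1 : ℂ) else 0) • (u1 i * v1 j)
      + ∑ i, ∑ j, (if n0 + e1 i + f2 j = 0 then (1 : ℂ) else 0) • (u1 i * v2 j)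
      + ∑ i, ∑ j, (if n0 + e2 i + f1 j = 0 then (1 : ℂ) else 0) • (u2 i * v1 j)
      + ∑ i, ∑ j, (if n0 + e2 i + f2 j = 0 then (1 : ℂ) else 0) • (u2 i * v2 j) := by
  have h := key (ι := ι ⊕ ι) n0 (Sum.elim e1 e2) (Sum.elim f1 f2)
    (Sum.elim u1 u2) (Sum.elim v1 v2)
  simp only [Fintype.sum_sum_type, Sum.elim_inl, Sum.elim_inr, Finset.sum_add_distrib] at h
  exact h.trans (by abel)

lemma eval {ι : Type*} [Fintype ι] [DecidableEq ι] {M : Type*} [AddCommMonoid M] [Module ℂ M]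
    (P : ι → ι → Prop) [∀ i j, Decidable (P i j)] (w : ι → ι → M) (i0 j0 : ι)
    (hcond : ∀ i j, P i j ↔ (i = i0 ∧ j = j0)) :
    ∑ i, ∑ j, (if P i j then (1 : ℂ) else 0) • w i j = w i0 j0 := by
  have h1 : ∀ i j, (if P i j then (1 : ℂ) else 0) • w i j
      = if i = i0 ∧ j = j0 then w i j else 0 := by
    intro i j; by_cases hp : P i j
    · rw [if_pos hp, if_pos ((hcond i j).1 hp), one_smul]
    · rw [if_neg hp, if_neg fun hc => hp ((hcond i j).2 hc), zero_smul]
  simp_rw [h1]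
  simp [ite_and, Finset.sum_ite_eq']

lemma evalZero {ι : Type*} [Fintype ι] {M : Type*} [AddCommMonoid M] [Module ℂ M]
    (P : ι → ι → Prop) [∀ i j, Decidable (P i j)] (w : ι → ι → M)
    (hcond : ∀ i j, ¬ P i j) :
    ∑ i, ∑ j, (if P i j then (1 : ℂ) else 0) • w i j = 0 := by
  simp [fun i j => hcond i j]

lemma star_coe_zpow (z : Circle) (n : ℤ) :
    star ((z ^ n : Circle) : ℂ) = ((z ^ (-n) : Circle) : ℂ) := by
  rw [zpow_neg, Circle.coe_inv_eq_conj]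
  rfl

lemma chi_mul (s t : ℤ) : chi s * chi t = chi (s + t) := by
  ext z
  show ((z ^ s : Circle) : ℂ) * ((z ^ t : Circle) : ℂ) = ((z ^ (s + t) : Circle) : ℂ)
  rw [← Circle.coe_mul, ← zpow_add]

lemma star_chi (s : ℤ) : star (chi s) = chi (-s) := by
  ext z
  show star ((z ^ s : Circle) : ℂ) = ((z ^ (-s) : Circle) : ℂ)
  exact star_coe_zpow z s

theorem stmt_2 {k : ℕ} (a : Fin (k + 1) → ℤ)
    (ha_pos : ∀ i, 0 < a i) (ha_mono : StrictMono a)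
    (Q : Type*) [NormedRing Q] [StarRing Q] [CStarRing Q]
    [NormedAlgebra ℂ Q] [StarModule ℂ Q] [CompleteSpace Q]
    (α : C(Circle, ℂ) →⋆ₐ[ℂ] C(Circle, Q))
    (B C : Fin (k + 1) → Fin (k + 1) → Q)
    (hα : ∀ i, ∀ z : Circle,
      α (chi (a i)) z
        = ∑ j, ((z ^ (a j) : Circle) : ℂ) • B i j
          + ∑ j, ((z ^ (-(a j)) : Circle) : ℂ) • C i j)
    (p q l m : Fin (k + 1)) (h : a p + a q = -a l + a m) :
    B p (Fin.last k) * B q (Fin.last k) = star (C l (Fin.last k)) * B m (Fin.last k) := by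
  classical
  set lst := Fin.last k with hlst
  set n0 : ℤ := -(2 * a lst) with hn0
  have hle : ∀ i, a i ≤ a lst := fun i => ha_mono.monotone (Fin.le_last i)
  have hinj : ∀ i, a i = a lst → i = lst := fun i hi => ha_mono.injective hi
  -- the condition lemmas
  have cond1 : ∀ i j : Fin (k + 1), (n0 + a i + a j = 0) ↔ (i = lst ∧ j = lst) := by
    intro i j
    constructor
    · intro hij
      have h1 := hle i; have h2 := hle j
      have hi : a i = a lst := by omega
      have hj : a j = a lst := by omega
      exact ⟨hinj i hi, hinj j hj⟩
    · rintro ⟨rfl, rfl⟩; omega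
  have cond2 : ∀ i j : Fin (k + 1), ¬ (n0 + a i + -(a j) = 0) := by
    intro i j hij
    have h1 := hle i; have h2 := ha_pos j; have h3 := ha_pos lst
    omega
  have cond3 : ∀ i j : Fin (k + 1), ¬ (n0 + -(a i) + a j = 0) := by
    intro i j hij
    have h1 := hle j; have h2 := ha_pos i; have h3 := ha_pos lst
    omega
  have cond4 : ∀ i j : Fin (k + 1), ¬ (n0 + -(a i) + -(a j) = 0) := by
    intro i j hij
    have h1 := ha_pos i; have h2 := ha_pos j; have h3 := ha_pos lst
    omega
  -- the function identity from applying α to χ_{a_p}·χ_{a_q} = χ_{-a_l}·χ_{a_m}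
  have hfun : ∀ z : Circle,
      (∑ j, ((z ^ (a j) : Circle) : ℂ) • B p j + ∑ j, ((z ^ (-(a j)) : Circle) : ℂ) • C p j) *
        (∑ j, ((z ^ (a j) : Circle) : ℂ) • B q j + ∑ j, ((z ^ (-(a j)) : Circle) : ℂ) • C q j)
      = (∑ j, ((z ^ (-(a j)) : Circle) : ℂ) • star (B l j)
          + ∑ j, ((z ^ (a j) : Circle) : ℂ) • star (C l j)) *
        (∑ j, ((z ^ (a j) : Circle) : ℂ) • B m j
          + ∑ j, ((z ^ (-(a j)) : Circle) : ℂ) • C m j) := by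
    intro z
    have hmaps : α (chi (a p)) * α (chi (a q)) = star (α (chi (a l))) * α (chi (a m)) := by
      rw [← map_star, ← map_mul, ← map_mul, star_chi, chi_mul, chi_mul, h]
    have happ : α (chi (a p)) z * α (chi (a q)) z
        = star (α (chi (a l)) z) * α (chi (a m)) z := by
      calc α (chi (a p)) z * α (chi (a q)) z
          = (α (chi (a p)) * α (chi (a q))) z := rfl
        _ = (star (α (chi (a l))) * α (chi (a m))) z := by rw [hmaps]
        _ = star (α (chi (a l)) z) * α (chi (a m)) z := rfl
    rw [hα p z, hα q z, hα l z, hα m z] at happ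
    simpa only [star_add, star_sum, star_smul, star_coe_zpow, neg_neg] using happ
  -- integrate both sides against z^{n0}
  have hint : (∫ z : Circle, ((z ^ n0 : Circle) : ℂ) •
        ((∑ j, ((z ^ (a j) : Circle) : ℂ) • B p j
            + ∑ j, ((z ^ (-(a j)) : Circle) : ℂ) • C p j) *
          (∑ j, ((z ^ (a j) : Circle) : ℂ) • B q j
            + ∑ j, ((z ^ (-(a j)) : Circle) : ℂ) • C q j)) ∂circleHaar)
      = ∫ z : Circle, ((z ^ n0 : Circle) : ℂ) •
        ((∑ j, ((z ^ (-(a j)) : Circle) : ℂ) • star (B l j)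
            + ∑ j, ((z ^ (a j) : Circle) : ℂ) • star (C l j)) *
          (∑ j, ((z ^ (a j) : Circle) : ℂ) • B m j
            + ∑ j, ((z ^ (-(a j)) : Circle) : ℂ) • C m j)) ∂circleHaar := by
    refine integral_congr_ae (Filter.Eventually.of_forall fun z => ?_)
    exact congrArg (fun x => ((z ^ n0 : Circle) : ℂ) • x) (hfun z)
  rw [key2 n0 (fun j => a j) (fun j => -(a j)) (fun j => a j) (fun j => -(a j))
        (B p) (C p) (B q) (C q),
      key2 n0 (fun j => -(a j)) (fun j => a j) (fun j => a j) (fun j => -(a j))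
        (fun j => star (B l j)) (fun j => star (C l j)) (B m) (C m)] at hint
  rw [eval _ _ lst lst cond1, evalZero _ _ cond2, evalZero _ _ cond3, evalZero _ _ cond4,
      evalZero _ _ cond3, evalZero _ _ cond4, eval _ _ lst lst cond1, evalZero _ _ cond2]
    at hint
  simpa using hint
end

section
/- If p, q, l, m ∈ {1, …, k} satisfy a_p - a_q = -a_l - a_m, then B_{pk}·star(C_{qk}) = star(C_{lk})·star(C_{mk}). (This is the pre-antipode form of the paper's Lemma 3.6, obtained by comparing the coefficient of χ_{2a_k} on both sides of α(χ_{a_p})·α(χ_{-a_q}) = α(χ_{-a_l})·α(χ_{-a_m}).) -/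
open MeasureTheory AddCircle

section Stmt4Aux

local instance fact_zero_lt_one' : Fact ((0 : ℝ) < 1) := ⟨one_pos⟩

/-- `toCircle` as an additive monoid hom into `Additive Circle`. -/
noncomputable def toCircleHom : AddCircle (1 : ℝ) →+ Additive Circle :=
  AddMonoidHom.mk' (fun x => Additive.ofMul (AddCircle.toCircle x))
    (fun x y => by simp [AddCircle.toCircle_add])

lemma toCircle_zsmul (n : ℤ) (x : AddCircle (1 : ℝ)) :
    AddCircle.toCircle (n • x) = AddCircle.toCircle x ^ n := by
  have h := map_zsmul toCircleHom n x
  simp only [toCircleHom, AddMonoidHom.mk'_apply] at h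
  rw [← ofMul_zpow] at h
  exact Additive.ofMul.injective h

lemma fourier_eq_toCircle (m : ℤ) (x : AddCircle (1 : ℝ)) :
    (fourier m x : ℂ) = ((AddCircle.toCircle x ^ m : Circle) : ℂ) := by
  rw [fourier_apply, _root_.toCircle_zsmul]

lemma integral_fourier' (j : ℤ) :
    ∫ x : AddCircle (1 : ℝ), (fourier j x : ℂ) ∂haarAddCircle
      = if j = 0 then 1 else 0 := by
  split_ifs with hj
  · subst hj
    simp only [fourier_zero]
    simp
  · exact integral_eq_zero_of_add_right_eq_neg
      (fourier_add_half_inv_index hj one_pos)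

variable {Q : Type*} [NormedRing Q] [NormedAlgebra ℂ Q] [CompleteSpace Q]

lemma coeff_monomial (n mm : ℤ) (v : Q) :
    ∫ x : AddCircle (1 : ℝ),
        (fourier (-n) x : ℂ) • ((AddCircle.toCircle x ^ mm : Circle) : ℂ) • v ∂haarAddCircle
      = if mm = n then v else 0 := by
  have hpt : ∀ x : AddCircle (1 : ℝ),
      (fourier (-n) x : ℂ) • ((AddCircle.toCircle x ^ mm : Circle) : ℂ) • v
        = (fourier (-n + mm) x : ℂ) • v := by
    intro x
    rw [smul_smul, ← fourier_eq_toCircle, ← fourier_add]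
  simp_rw [hpt]
  rw [integral_smul_const, integral_fourier']
  by_cases hmn : mm = n
  · rw [if_pos (by omega), if_pos hmn, one_smul]
  · rw [if_neg (by omega), if_neg hmn, zero_smul]

lemma coeff_sum {ι : Type*} [Fintype ι] (n : ι → ℤ) (v : ι → Q) (N : ℤ) :
    ∫ x : AddCircle (1 : ℝ),
        (fourier (-N) x : ℂ) • (∑ i, ((AddCircle.toCircle x ^ n i : Circle) : ℂ) • v i)
          ∂haarAddCircle
      = ∑ i, if n i = N then v i else 0 := by
  simp_rw [Finset.smul_sum]
  rw [integral_finset_sum]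
  · exact Finset.sum_congr rfl fun i _ => coeff_monomial N (n i) (v i)
  · intro i _
    have hc : Continuous fun x : AddCircle (1 : ℝ) =>
        (fourier (-N) x : ℂ) • ((AddCircle.toCircle x ^ n i : Circle) : ℂ) • v i := by
      apply (map_continuous (fourier (-N))).smul
      exact (continuous_induced_dom.comp
        (show Continuous fun x : AddCircle (1 : ℝ) => AddCircle.toCircle x ^ n i from
          (continuous_zpow (n i)).comp AddCircle.continuous_toCircle)).smul continuous_const
    exact hc.integrable_of_hasCompactSupport (HasCompactSupport.of_compactSpace _)

end Stmt4Aux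

theorem stmt_4 {k : ℕ} (a : Fin (k + 1) → ℤ)
    (ha_pos : ∀ i, 0 < a i) (ha_mono : StrictMono a)
    (Q : Type*) [NormedRing Q] [StarRing Q] [CStarRing Q]
    [NormedAlgebra ℂ Q] [StarModule ℂ Q] [CompleteSpace Q]
    (α : C(Circle, ℂ) →⋆ₐ[ℂ] C(Circle, Q))
    (B C : Fin (k + 1) → Fin (k + 1) → Q)
    (hα : ∀ i, ∀ z : Circle,
      α (chi (a i)) z
        = ∑ j, ((z ^ (a j) : Circle) : ℂ) • B i j
          + ∑ j, ((z ^ (-(a j)) : Circle) : ℂ) • C i j)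
    (p q l m : Fin (k + 1)) (h : a p - a q = -a l - a m) :
    B p (Fin.last k) * star (C q (Fin.last k))
      = star (C l (Fin.last k)) * star (C m (Fin.last k)) := by
  classical
  haveI : Fact ((0 : ℝ) < 1) := ⟨one_pos⟩
  set K := Fin.last k with hK
  -- basic facts about chi
  have hchi_mul : ∀ m' n' : ℤ, chi m' * chi n' = chi (m' + n') := by
    intro m' n'
    ext z
    simp only [ContinuousMap.mul_apply, chi, ContinuousMap.coe_mk, zpow_add]
    push_cast
    ring
  have hcoe_neg : ∀ (z : Circle) (n' : ℤ),
      ((z ^ (-n') : Circle) : ℂ) = star ((z ^ n' : Circle) : ℂ) := by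
    intro z n'
    rw [zpow_neg, Circle.coe_inv_eq_conj]
    rfl
  have hchi_star : ∀ n' : ℤ, star (chi n') = chi (-n') := by
    intro n'
    ext z
    simp only [ContinuousMap.star_apply, chi, ContinuousMap.coe_mk]
    rw [hcoe_neg]
  -- the key functional equation
  have harg : a p + -a q = -a l + -a m := by omega
  have key : α (chi (a p)) * star (α (chi (a q)))
      = star (α (chi (a l))) * star (α (chi (a m))) := by
    rw [← map_star, ← map_star, ← map_star, ← map_mul, ← map_mul,
      hchi_star, hchi_star, hchi_star, hchi_mul, hchi_mul, harg]
  -- expansion of star of the α-image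
  have hαstar : ∀ i, ∀ z : Circle,
      star (α (chi (a i)) z)
        = ∑ j, ((z ^ (a j) : Circle) : ℂ) • star (C i j)
          + ∑ j, ((z ^ (-(a j)) : Circle) : ℂ) • star (B i j) := by
    intro i z
    rw [hα i z, star_add, star_sum, star_sum, add_comm]
    congr 1
    · exact Finset.sum_congr rfl fun j _ => by
        rw [star_smul, hcoe_neg z (a j), star_star]
    · exact Finset.sum_congr rfl fun j _ => by
        rw [star_smul, hcoe_neg z (a j)]
  -- combinatorial characterisation
  have hle : ∀ j : Fin (k + 1), a j ≤ a K := fun j => ha_mono.monotone (Fin.le_last j)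
  have hchar : ∀ e1 e2 : Fin 2, ∀ j1 j2 : Fin (k + 1),
      (if e1 = 0 then a j1 else -(a j1)) + (if e2 = 0 then a j2 else -(a j2)) = 2 * a K
      → ((e1, j1), (e2, j2)) = (((0 : Fin 2), K), ((0 : Fin 2), K)) := by
    intro e1 e2 j1 j2 hc
    have h1 := hle j1
    have h2 := hle j2
    have h3 := ha_pos j1
    have h4 := ha_pos j2
    have h5 := ha_pos K
    fin_cases e1 <;> fin_cases e2 <;> norm_num at hc ⊢
    · exact ⟨ha_mono.injective (by omega), ha_mono.injective (by omega)⟩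
    · omega
    · omega
    · omega
  -- general coefficient extraction for a product of two trig polynomials
  have main : ∀ u w u' w' : Fin (k + 1) → Q,
      (∫ x : AddCircle (1 : ℝ), (fourier (-(2 * a K)) x : ℂ) •
        ((∑ j, ((AddCircle.toCircle x ^ a j : Circle) : ℂ) • u j
            + ∑ j, ((AddCircle.toCircle x ^ (-(a j)) : Circle) : ℂ) • w j)
          * (∑ j, ((AddCircle.toCircle x ^ a j : Circle) : ℂ) • u' j
            + ∑ j, ((AddCircle.toCircle x ^ (-(a j)) : Circle) : ℂ) • w' j)) ∂haarAddCircle)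
        = u K * u' K := by
    intro u w u' w'
    set ι : Type := (Fin 2 × Fin (k + 1)) × (Fin 2 × Fin (k + 1)) with hι
    set n₁ : Fin 2 × Fin (k + 1) → ℤ :=
      fun s => if s.1 = 0 then a s.2 else -(a s.2) with hn₁
    set v₁ : Fin 2 × Fin (k + 1) → Q :=
      fun s => if s.1 = 0 then u s.2 else w s.2 with hv₁
    set v₂ : Fin 2 × Fin (k + 1) → Q :=
      fun s => if s.1 = 0 then u' s.2 else w' s.2 with hv₂
    set nn : ι → ℤ := fun st => n₁ st.1 + n₁ st.2 with hnn
    set vv : ι → Q := fun st => v₁ st.1 * v₂ st.2 with hvv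
    have hfac : ∀ (x : AddCircle (1 : ℝ)) (v : Fin 2 × Fin (k + 1) → Q),
        (∑ s : Fin 2 × Fin (k + 1),
              ((AddCircle.toCircle x ^ n₁ s : Circle) : ℂ) • v s)
          = ∑ j, ((AddCircle.toCircle x ^ a j : Circle) : ℂ) • v (0, j)
            + ∑ j, ((AddCircle.toCircle x ^ (-(a j)) : Circle) : ℂ) • v (1, j) := by
      intro x v
      rw [Fintype.sum_prod_type, Fin.sum_univ_two]
      simp [hn₁]
    have hprod : ∀ x : AddCircle (1 : ℝ),
        ((∑ j, ((AddCircle.toCircle x ^ a j : Circle) : ℂ) • u j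
            + ∑ j, ((AddCircle.toCircle x ^ (-(a j)) : Circle) : ℂ) • w j)
          * (∑ j, ((AddCircle.toCircle x ^ a j : Circle) : ℂ) • u' j
            + ∑ j, ((AddCircle.toCircle x ^ (-(a j)) : Circle) : ℂ) • w' j))
          = ∑ st : ι, ((AddCircle.toCircle x ^ nn st : Circle) : ℂ) • vv st := by
      intro x
      have e10 : ∀ j, v₁ (0, j) = u j := fun j => if_pos rfl
      have e11 : ∀ j, v₁ (1, j) = w j := fun j => if_neg one_ne_zero
      have e20 : ∀ j, v₂ (0, j) = u' j := fun j => if_pos rfl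
      have e21 : ∀ j, v₂ (1, j) = w' j := fun j => if_neg one_ne_zero
      have h1 := hfac x v₁
      have h2 := hfac x v₂
      simp only [e10, e11] at h1
      simp only [e20, e21] at h2
      rw [← h1, ← h2, Finset.sum_mul_sum]
      rw [Fintype.sum_prod_type (f := fun st : ι =>
        ((AddCircle.toCircle x ^ nn st : Circle) : ℂ) • vv st)]
      apply Finset.sum_congr rfl
      intro s _
      apply Finset.sum_congr rfl
      intro t _
      rw [smul_mul_smul_comm]
      congr 1
      rw [hnn]
      simp only
      rw [zpow_add]
      push_cast
      ring
    calc
      (∫ x : AddCircle (1 : ℝ), (fourier (-(2 * a K)) x : ℂ) •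
          ((∑ j, ((AddCircle.toCircle x ^ a j : Circle) : ℂ) • u j
              + ∑ j, ((AddCircle.toCircle x ^ (-(a j)) : Circle) : ℂ) • w j)
            * (∑ j, ((AddCircle.toCircle x ^ a j : Circle) : ℂ) • u' j
              + ∑ j, ((AddCircle.toCircle x ^ (-(a j)) : Circle) : ℂ) • w' j)) ∂haarAddCircle)
          = ∑ st : ι, if nn st = 2 * a K then vv st else 0 := by
            simp_rw [hprod]
            exact coeff_sum nn vv (2 * a K)
      _ = u K * u' K := by
            rw [Finset.sum_eq_single ((((0 : Fin 2), K), ((0 : Fin 2), K)) : ι)]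
            · have hcond : nn (((0 : Fin 2), K), ((0 : Fin 2), K)) = 2 * a K := by
                simp only [hnn, hn₁]
                simp
                ring
              rw [if_pos hcond]
              simp [hvv, hv₁, hv₂]
            · rintro ⟨⟨e1, j1⟩, e2, j2⟩ _ hst
              rw [if_neg]
              intro hc
              simp only [hnn, hn₁] at hc
              exact hst (hchar e1 e2 j1 j2 hc)
            · intro hmem
              exact absurd (Finset.mem_univ _) hmem
  -- apply `main` to both sides of `key`
  have hFcoef :
      (∫ x : AddCircle (1 : ℝ), (fourier (-(2 * a K)) x : ℂ) •
        ((α (chi (a p)) * star (α (chi (a q)))) (AddCircle.toCircle x)) ∂haarAddCircle)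
        = B p K * star (C q K) := by
    have hpt : ∀ x : AddCircle (1 : ℝ),
        (α (chi (a p)) * star (α (chi (a q)))) (AddCircle.toCircle x)
          = (∑ j, ((AddCircle.toCircle x ^ a j : Circle) : ℂ) • B p j
              + ∑ j, ((AddCircle.toCircle x ^ (-(a j)) : Circle) : ℂ) • C p j)
            * (∑ j, ((AddCircle.toCircle x ^ a j : Circle) : ℂ) • star (C q j)
              + ∑ j, ((AddCircle.toCircle x ^ (-(a j)) : Circle) : ℂ) • star (B q j)) := by
      intro x
      rw [ContinuousMap.mul_apply, ContinuousMap.star_apply, hα p, hαstar q]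
    simp_rw [hpt]
    exact main (B p) (C p) (fun j => star (C q j)) (fun j => star (B q j))
  have hGcoef :
      (∫ x : AddCircle (1 : ℝ), (fourier (-(2 * a K)) x : ℂ) •
        ((star (α (chi (a l))) * star (α (chi (a m)))) (AddCircle.toCircle x)) ∂haarAddCircle)
        = star (C l K) * star (C m K) := by
    have hpt : ∀ x : AddCircle (1 : ℝ),
        (star (α (chi (a l))) * star (α (chi (a m)))) (AddCircle.toCircle x)
          = (∑ j, ((AddCircle.toCircle x ^ a j : Circle) : ℂ) • star (C l j)
              + ∑ j, ((AddCircle.toCircle x ^ (-(a j)) : Circle) : ℂ) • star (B l j))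
            * (∑ j, ((AddCircle.toCircle x ^ a j : Circle) : ℂ) • star (C m j)
              + ∑ j, ((AddCircle.toCircle x ^ (-(a j)) : Circle) : ℂ) • star (B m j)) := by
      intro x
      rw [ContinuousMap.mul_apply, ContinuousMap.star_apply, ContinuousMap.star_apply,
        hαstar l, hαstar m]
    simp_rw [hpt]
    exact main (fun j => star (C l j)) (fun j => star (B l j))
      (fun j => star (C m j)) (fun j => star (B m j))
  rw [← hFcoef, ← hGcoef, key]
end

section
/- For every i ∈ {1, …, k}, B_{ik}·star(C_{ik}) = 0 and C_{ik}·star(B_{ik}) = 0. (This is the pre-antipode form of the paper's Lemma 3.7: since χ_{a_i}·χ_{-a_i} = 1 and α is a unital homomorphism, α(χ_{a_i})·α(χ_{-a_i}) = 1, and comparing the coefficients of χ_{2a_k} and χ_{-2a_k} on both sides yields A_{i(2k-1)}·A_{i(2k)}^* = A_{i(2k)}·A_{i(2k-1)}^* = 0.) -/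
open Complex

lemma hinj' : Function.Injective (fun n : ℤ => Circle.coeHom.comp (zpowGroupHom n)) := by
  intro n m h
  have h1 : ((Circle.exp 1 : Circle) : ℂ) ^ n = ((Circle.exp 1 : Circle) : ℂ) ^ m :=
    DFunLike.congr_fun h (Circle.exp 1)
  rw [Circle.coe_exp] at h1
  push_cast at h1
  rw [one_mul, ← Complex.exp_int_mul, ← Complex.exp_int_mul,
    Complex.exp_eq_exp_iff_exists_int] at h1
  obtain ⟨j, hj⟩ := h1
  have hj' : (n : ℂ) = (m : ℂ) + j * (2 * Real.pi) := by
    have hI : (n : ℂ) * I = ((m : ℂ) + j * (2 * Real.pi)) * I := by rw [hj]; ring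
    exact mul_right_cancel₀ Complex.I_ne_zero hI
  have hr : (n : ℝ) = (m : ℝ) + j * (2 * Real.pi) := by
    have := congrArg Complex.re hj'
    simpa using this
  rcases eq_or_ne j 0 with hj0 | hj0
  · subst hj0; simp at hr; exact_mod_cast hr
  · exfalso
    apply irrational_pi
    refine ⟨((n : ℚ) - m) / (2 * j), ?_⟩
    have hj0' : (j : ℝ) ≠ 0 := Int.cast_ne_zero.mpr hj0
    push_cast
    field_simp
    linarith [hr]

lemma extract' (c : ℤ →₀ ℂ)
    (h : ∀ z : Circle, Finsupp.linearCombination ℂ (fun n : ℤ => ((z : ℂ) ^ n)) c = 0) :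
    c = 0 := by
  have li : LinearIndependent ℂ (fun n : ℤ => (fun z : Circle => (z : ℂ) ^ n)) := by
    have := (linearIndependent_monoidHom Circle ℂ).comp
      (fun n : ℤ => Circle.coeHom.comp (zpowGroupHom n)) hinj'
    exact this
  refine linearIndependent_iff.mp li c ?_
  funext z
  have hz := h z
  rw [Finsupp.linearCombination_apply] at hz ⊢
  simpa [Finsupp.sum, Finset.sum_apply] using hz

lemma dsum_apply {k : ℕ} (g : Fin (k+1) → Fin (k+1) → ℤ) (v : Fin (k+1) → Fin (k+1) → ℂ)
    (N : ℤ) :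
    (∑ j, ∑ l, Finsupp.single (g j l) (v j l)) N
      = ∑ j, ∑ l, if g j l = N then v j l else 0 := by
  rw [Finsupp.finset_sum_apply]
  refine Finset.sum_congr rfl fun j _ => ?_
  rw [Finsupp.finset_sum_apply]
  exact Finset.sum_congr rfl fun l _ => Finsupp.single_apply

theorem stmt_5 {k : ℕ} (a : Fin (k + 1) → ℤ)
    (ha_pos : ∀ i, 0 < a i) (ha_mono : StrictMono a)
    (Q : Type*) [NormedRing Q] [StarRing Q] [CStarRing Q]
    [NormedAlgebra ℂ Q] [StarModule ℂ Q] [CompleteSpace Q]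
    (α : C(Circle, ℂ) →⋆ₐ[ℂ] C(Circle, Q))
    (B C : Fin (k + 1) → Fin (k + 1) → Q)
    (hα : ∀ i, ∀ z : Circle,
      α (chi (a i)) z
        = ∑ j, ((z ^ (a j) : Circle) : ℂ) • B i j
          + ∑ j, ((z ^ (-(a j)) : Circle) : ℂ) • C i j)
    (i : Fin (k + 1)) :
    B i (Fin.last k) * star (C i (Fin.last k)) = 0 ∧
      C i (Fin.last k) * star (B i (Fin.last k)) = 0 := by
  have hAle : ∀ j, a j ≤ a (Fin.last k) := fun j => ha_mono.monotone (Fin.le_last j)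
  have hAlt : ∀ j, j ≠ Fin.last k → a j < a (Fin.last k) :=
    fun j hj => ha_mono (lt_of_le_of_ne (Fin.le_last j) hj)
  have hA0 : 0 < a (Fin.last k) := ha_pos _
  have key : ∀ φ : Q →L[ℂ] ℂ,
      φ (B i (Fin.last k) * star (C i (Fin.last k))) = 0 ∧
      φ (C i (Fin.last k) * star (B i (Fin.last k))) = 0 := by
    intro φ
    set c : ℤ →₀ ℂ :=
      ((∑ j, ∑ l, Finsupp.single (a j + -a l) (φ (B i j * star (B i l)))
        + ∑ j, ∑ l, Finsupp.single (a j + a l) (φ (B i j * star (C i l))))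
        + (∑ j, ∑ l, Finsupp.single (-a j + -a l) (φ (C i j * star (B i l)))
        + ∑ j, ∑ l, Finsupp.single (-a j + a l) (φ (C i j * star (C i l)))))
        - Finsupp.single 0 (φ 1) with hcdef
    have hc0 : c = 0 := by
      apply extract'
      intro z
      have hW : (z : ℂ) ≠ 0 := by
        intro h0
        have := Circle.norm_coe z
        rw [h0] at this
        simp at this
      have hmul : chi (a i) * star (chi (a i)) = 1 := by
        ext u
        show ((u ^ a i : Circle) : ℂ) * star ((u ^ a i : Circle) : ℂ) = 1
        rw [Complex.star_def, Complex.mul_conj, Circle.normSq_coe, Complex.ofReal_one]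
      have hmul' : α (chi (a i)) * star (α (chi (a i))) = 1 := by
        rw [← map_star, ← map_mul, hmul, map_one]
      have h1 : α (chi (a i)) z * star (α (chi (a i)) z) = 1 := by
        have := DFunLike.congr_fun hmul' z
        simpa [ContinuousMap.mul_apply, ContinuousMap.star_apply] using this
      have hS : α (chi (a i)) z
          = ∑ j, (z : ℂ) ^ (a j) • B i j + ∑ j, (z : ℂ) ^ (-a j) • C i j := hα i z
      have hconj : ∀ n : ℤ, star ((z : ℂ) ^ n) = (z : ℂ) ^ (-n) := by
        intro n
        rw [star_zpow₀, Complex.star_def, ← Circle.coe_inv_eq_conj, Circle.coe_inv,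
          inv_zpow, ← zpow_neg]
      have hT : star (α (chi (a i)) z)
          = ∑ j, (z : ℂ) ^ (-a j) • star (B i j) + ∑ j, (z : ℂ) ^ (a j) • star (C i j) := by
        rw [hS, star_add, star_sum, star_sum]
        simp only [star_smul, hconj, neg_neg]
      have h2 : (∑ j, (z : ℂ) ^ (a j) • B i j + ∑ j, (z : ℂ) ^ (-a j) • C i j)
          * (∑ j, (z : ℂ) ^ (-a j) • star (B i j) + ∑ j, (z : ℂ) ^ (a j) • star (C i j))
          = 1 := by
        rw [← hS, ← hT, h1]
      rw [add_mul, mul_add, mul_add] at h2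
      simp only [Finset.sum_mul_sum, smul_mul_smul_comm, ← zpow_add₀ hW] at h2
      have hφ2 := congrArg φ h2
      simp only [map_add, map_sum, map_smul, map_one, smul_eq_mul] at hφ2
      rw [hcdef]
      simp only [map_sub, map_add, map_sum, Finsupp.linearCombination_single, smul_eq_mul,
        zpow_zero, mul_one]
      simp only [mul_comm] at hφ2 ⊢
      linear_combination hφ2
    constructor
    · have e1 := DFunLike.congr_fun hc0 (a (Fin.last k) + a (Fin.last k))
      rw [hcdef] at e1
      simp only [Finsupp.sub_apply, Finsupp.add_apply, dsum_apply, Finsupp.single_apply,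
        Finsupp.zero_apply, Finsupp.coe_zero, Pi.zero_apply] at e1
      rw [Finset.sum_eq_zero (f := fun j => ∑ l, if a j + -a l = a (Fin.last k) + a (Fin.last k) then φ (B i j * star (B i l)) else 0) ?_,
        Finset.sum_eq_zero (f := fun j => ∑ l, if -a j + -a l = a (Fin.last k) + a (Fin.last k) then φ (C i j * star (B i l)) else 0) ?_,
        Finset.sum_eq_zero (f := fun j => ∑ l, if -a j + a l = a (Fin.last k) + a (Fin.last k) then φ (C i j * star (C i l)) else 0) ?_] at e1
      · rw [Finset.sum_eq_single (Fin.last k)] at e1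
        · rw [Finset.sum_eq_single (Fin.last k)] at e1
          · rw [if_pos rfl, if_neg (by omega)] at e1
            simpa using e1
          · intro l _ hl
            have := hAlt l hl
            rw [if_neg (by omega)]
          · intro h; exact absurd (Finset.mem_univ _) h
        · intro j _ hj
          have := hAlt j hj
          refine Finset.sum_eq_zero fun l _ => ?_
          have := hAle l
          rw [if_neg (by omega)]
        · intro h; exact absurd (Finset.mem_univ _) h
      · intro j _
        refine Finset.sum_eq_zero fun l _ => ?_
        have h1 := hAle j; have h2 := hAle l; have h3 := ha_pos j; have h4 := ha_pos l
        rw [if_neg (by omega)]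
      · intro j _
        refine Finset.sum_eq_zero fun l _ => ?_
        have h1 := hAle j; have h2 := hAle l; have h3 := ha_pos j; have h4 := ha_pos l
        rw [if_neg (by omega)]
      · intro j _
        refine Finset.sum_eq_zero fun l _ => ?_
        have h1 := hAle j; have h2 := hAle l; have h3 := ha_pos j; have h4 := ha_pos l
        rw [if_neg (by omega)]
    · have e1 := DFunLike.congr_fun hc0 (-a (Fin.last k) + -a (Fin.last k))
      rw [hcdef] at e1
      simp only [Finsupp.sub_apply, Finsupp.add_apply, dsum_apply, Finsupp.single_apply,
        Finsupp.zero_apply, Finsupp.coe_zero, Pi.zero_apply] at e1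
      rw [Finset.sum_eq_zero (f := fun j => ∑ l, if a j + -a l = -a (Fin.last k) + -a (Fin.last k) then φ (B i j * star (B i l)) else 0) ?_,
        Finset.sum_eq_zero (f := fun j => ∑ l, if a j + a l = -a (Fin.last k) + -a (Fin.last k) then φ (B i j * star (C i l)) else 0) ?_,
        Finset.sum_eq_zero (f := fun j => ∑ l, if -a j + a l = -a (Fin.last k) + -a (Fin.last k) then φ (C i j * star (C i l)) else 0) ?_] at e1
      · rw [Finset.sum_eq_single (Fin.last k)] at e1
        · rw [Finset.sum_eq_single (Fin.last k)] at e1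
          · rw [if_pos rfl, if_neg (by omega)] at e1
            simpa using e1
          · intro l _ hl
            have := hAlt l hl
            rw [if_neg (by omega)]
          · intro h; exact absurd (Finset.mem_univ _) h
        · intro j _ hj
          have := hAlt j hj
          refine Finset.sum_eq_zero fun l _ => ?_
          have := hAle l
          rw [if_neg (by omega)]
        · intro h; exact absurd (Finset.mem_univ _) h
      · intro j _
        refine Finset.sum_eq_zero fun l _ => ?_
        have h1 := hAle j; have h2 := hAle l; have h3 := ha_pos j; have h4 := ha_pos l
        rw [if_neg (by omega)]
      · intro j _
        refine Finset.sum_eq_zero fun l _ => ?_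
        have h1 := hAle j; have h2 := hAle l; have h3 := ha_pos j; have h4 := ha_pos l
        rw [if_neg (by omega)]
      · intro j _
        refine Finset.sum_eq_zero fun l _ => ?_
        have h1 := hAle j; have h2 := hAle l; have h3 := ha_pos j; have h4 := ha_pos l
        rw [if_neg (by omega)]
  constructor
  · by_contra hx
    obtain ⟨φ, -, hφx⟩ := exists_dual_vector ℂ _ (norm_ne_zero_iff.mpr hx)
    have h0 := (key φ).1
    rw [hφx] at h0
    exact hx (by simpa [norm_eq_zero] using h0)
  · by_contra hx
    obtain ⟨φ, -, hφx⟩ := exists_dual_vector ℂ _ (norm_ne_zero_iff.mpr hx)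
    have h0 := (key φ).2
    rw [hφx] at h0
    exact hx (by simpa [norm_eq_zero] using h0)
end

section
/- Let Q be a unital ⋆-ring and let A_1, …, A_m ∈ Q satisfy ∑_{i=1}^m A_i·A_i* = 1, ∑_{i=1}^m A_i*·A_i = 1, and A_i·A_j = 0 whenever i ≠ j. Then for every i, A_i^2·A_i* = A_i and A_i*·A_i^2 = A_i, and consequently each A_i is normal: A_i·A_i* = A_i*·A_i. (This is the paper's Lemma 3.9, where the two sum conditions come from the unitarity of the rows of the fundamental unitary and the vanishing products come from Lemma 3.8.) -/
theorem stmt_7 (Q : Type*) [Ring Q] [StarRing Q] (m : ℕ) (A : Fin m → Q)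
    (h1 : ∑ i, A i * star (A i) = 1)
    (h2 : ∑ i, star (A i) * A i = 1)
    (h3 : ∀ i j, i ≠ j → A i * A j = 0) :
    ∀ i, A i ^ 2 * star (A i) = A i ∧ star (A i) * A i ^ 2 = A i ∧
      A i * star (A i) = star (A i) * A i := by
  intro i
  have key1 : A i ^ 2 * star (A i) = A i := by
    calc A i ^ 2 * star (A i) = ∑ j, A i * (A j * star (A j)) := by
          rw [Finset.sum_eq_single i]
          · rw [sq, mul_assoc]
          · intro j _ hj
            rw [← mul_assoc, h3 i j (fun h => hj h.symm), zero_mul]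
          · simp
      _ = A i := by rw [← Finset.mul_sum, h1, mul_one]
  have key2 : star (A i) * A i ^ 2 = A i := by
    calc star (A i) * A i ^ 2 = ∑ j, (star (A j) * A j) * A i := by
          rw [Finset.sum_eq_single i]
          · rw [sq, mul_assoc]
          · intro j _ hj
            rw [mul_assoc, h3 j i hj, mul_zero]
          · simp
      _ = A i := by rw [← Finset.sum_mul, h2, one_mul]
  refine ⟨key1, key2, ?_⟩
  calc A i * star (A i) = star (A i) * A i ^ 2 * star (A i) := by rw [key2]
    _ = star (A i) * (A i ^ 2 * star (A i)) := by rw [mul_assoc]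
    _ = star (A i) * A i := by rw [key1]
end

section
/- Assume in addition that the fundamental coefficient matrix is diagonal, i.e. B_{ij} = 0 and C_{ij} = 0 whenever j ≠ i, so that α(χ_{a_i}) is the function z ↦ z^{a_i}·B_{ii} + z^{-a_i}·C_{ii}. If p, q are positive integers and i, j ∈ {1,…,k} satisfy p·a_i = q·a_j, then B_{ii}^p = B_{jj}^q and C_{ii}^p = C_{jj}^q. (This is the relation A_{i(2i-1)}^{p(i,j)} = A_{j(2j-1)}^{q(i,j)} and A_{i(2i)}^{p(i,j)} = A_{j(2j)}^{q(i,j)} used at the end of the proof of Theorem 3.1, obtained by comparing the top and bottom Fourier coefficients of α(χ_{a_i})^p = α(χ_{a_j})^q.) -/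
/-- The character `z ↦ z ^ n` as a monoid homomorphism `Circle →* ℂ`. -/
noncomputable def psiChar (n : ℤ) : Circle →* ℂ :=
  Circle.coeHom.comp (zpowGroupHom n)

lemma circle_exp_zpow (n : ℤ) (t : ℝ) : Circle.exp t ^ n = Circle.exp (n * t) := by
  have := map_zsmul Circle.expHom n t
  simpa [zsmul_eq_mul] using this.symm

lemma psiChar_inj : Function.Injective psiChar := by
  intro n m hnm
  have h1 : psiChar n (Circle.exp 1) = psiChar m (Circle.exp 1) := by rw [hnm]
  simp only [psiChar, MonoidHom.comp_apply, zpowGroupHom_apply, Circle.coeHom_apply] at h1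
  have h2 : Circle.exp n = Circle.exp m := by
    have := h1
    rw [circle_exp_zpow, circle_exp_zpow] at this
    rw [mul_one, mul_one] at this
    exact Subtype.ext this
  rw [Circle.exp_eq_exp] at h2
  obtain ⟨t, ht⟩ := h2
  by_cases h0 : t = 0
  · subst h0; simp at ht; exact_mod_cast ht
  · exfalso
    have h2t : (2 * (t : ℝ)) ≠ 0 := by
      simp only [ne_eq, mul_eq_zero]
      push_neg
      exact ⟨two_ne_zero, Int.cast_ne_zero.mpr h0⟩
    have hπ : (Real.pi : ℝ) = ((n - m : ℚ) / (2 * t) : ℚ) := by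
      push_cast
      rw [eq_div_iff h2t]
      linarith [ht]
    exact (Rat.not_irrational _) (hπ ▸ irrational_pi)

lemma coeff_eq_zero (s : Finset ℤ) (g : ℤ → ℂ)
    (hz : ∀ z : Circle, ∑ n ∈ s, g n * ((z ^ n : Circle) : ℂ) = 0) :
    ∀ n ∈ s, g n = 0 := by
  have li : LinearIndependent ℂ (fun n : ℤ => ((psiChar n : Circle → ℂ))) :=
    (linearIndependent_monoidHom Circle ℂ).comp psiChar psiChar_inj
  rw [linearIndependent_iff'] at li
  refine li s g (funext fun z => ?_)
  simp only [Finset.sum_apply, Pi.smul_apply, smul_eq_mul, psiChar, MonoidHom.coe_comp, Function.comp_apply, zpowGroupHom_apply, Pi.zero_apply]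
  exact hz z

lemma expand_pow {Q : Type*} [Ring Q] [Algebra ℂ Q] (a : ℤ) (ha : 0 < a) (B C : Q) (p : ℕ) :
    ∃ D : ℤ → Q, D ((p : ℤ) * a) = B ^ p ∧ D (-((p : ℤ) * a)) = C ^ p ∧
      (∀ n, n ∉ Finset.Icc (-((p : ℤ) * a)) ((p : ℤ) * a) → D n = 0) ∧
      ∀ z : Circle, (((z ^ a : Circle) : ℂ) • B + ((z ^ (-a) : Circle) : ℂ) • C) ^ p
        = ∑ n ∈ Finset.Icc (-((p : ℤ) * a)) ((p : ℤ) * a), ((z ^ n : Circle) : ℂ) • D n := by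
  induction p with
  | zero =>
    refine ⟨fun n => if n = 0 then 1 else 0, by simp, by simp, ?_, ?_⟩
    · intro n hn
      simp only [Nat.cast_zero, zero_mul, neg_zero, Finset.Icc_self, Finset.mem_singleton] at hn
      simp [hn]
    · intro z
      simp
  | succ p ih =>
    obtain ⟨D, hD1, hD2, hD3, hD4⟩ := ih
    set N : ℤ := (p : ℤ) * a with hN
    have hN0 : 0 ≤ N := mul_nonneg (Int.natCast_nonneg p) ha.le
    have hM : ((p + 1 : ℕ) : ℤ) * a = N + a := by push_cast; ring
    refine ⟨fun m => D (m - a) * B + D (m + a) * C, ?_, ?_, ?_, ?_⟩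
    · rw [hM]
      have h2 : D (N + a + a) = 0 := hD3 _ (by rw [Finset.mem_Icc]; omega)
      simp [hD1, h2, pow_succ]
    · rw [hM]
      show D (-(N + a) - a) * B + D (-(N + a) + a) * C = C ^ (p + 1)
      have h2 : D (-(N + a) - a) = 0 := hD3 _ (by rw [Finset.mem_Icc]; omega)
      have he : -(N + a) + a = -N := by ring
      rw [he, h2, hD2, pow_succ, zero_mul, zero_add]
    · intro m hm
      rw [hM, Finset.mem_Icc] at hm
      have h1 : D (m - a) = 0 := hD3 _ (by rw [Finset.mem_Icc]; omega)
      have h2 : D (m + a) = 0 := hD3 _ (by rw [Finset.mem_Icc]; omega)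
      simp [h1, h2]
    · intro z
      rw [pow_succ, hD4 z, hM, Finset.sum_mul]
      have hterm : ∀ n : ℤ,
          (((z ^ n : Circle) : ℂ) • D n) *
              (((z ^ a : Circle) : ℂ) • B + ((z ^ (-a) : Circle) : ℂ) • C)
            = ((z ^ (n + a) : Circle) : ℂ) • (D n * B)
              + ((z ^ (n - a) : Circle) : ℂ) • (D n * C) := by
        intro n
        rw [mul_add, smul_mul_smul_comm, smul_mul_smul_comm]
        congr 2
        · rw [← Circle.coe_mul, ← zpow_add]
        · rw [← Circle.coe_mul, ← zpow_add]
          norm_num [sub_eq_add_neg, add_comm]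
      rw [Finset.sum_congr rfl fun n _ => hterm n, Finset.sum_add_distrib]
      have hre1 : ∑ n ∈ Finset.Icc (-N) N, ((z ^ (n + a) : Circle) : ℂ) • (D n * B)
          = ∑ m ∈ Finset.Icc (-N + a) (N + a), ((z ^ m : Circle) : ℂ) • (D (m - a) * B) := by
        rw [← Finset.map_add_right_Icc, Finset.sum_map]
        simp [addRightEmbedding]
      have hre2 : ∑ n ∈ Finset.Icc (-N) N, ((z ^ (n - a) : Circle) : ℂ) • (D n * C)
          = ∑ m ∈ Finset.Icc (-N + -a) (N + -a), ((z ^ m : Circle) : ℂ) • (D (m + a) * C) := by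
        rw [← Finset.map_add_right_Icc, Finset.sum_map]
        refine Finset.sum_congr rfl fun n _ => ?_
        simp [addRightEmbedding, sub_eq_add_neg]
      rw [hre1, hre2]
      rw [Finset.sum_subset (Finset.Icc_subset_Icc (by omega) (by omega) :
            Finset.Icc (-N + a) (N + a) ⊆ Finset.Icc (-(N + a)) (N + a))
          (fun m _ hm => by
            have : D (m - a) = 0 := hD3 _ (by rw [Finset.mem_Icc] at *; omega)
            simp [this]),
        Finset.sum_subset (Finset.Icc_subset_Icc (by omega) (by omega) :
            Finset.Icc (-N + -a) (N + -a) ⊆ Finset.Icc (-(N + a)) (N + a))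
          (fun m _ hm => by
            have : D (m + a) = 0 := hD3 _ (by rw [Finset.mem_Icc] at *; omega)
            simp [this])]
      rw [← Finset.sum_add_distrib]
      exact Finset.sum_congr rfl fun m _ => (smul_add _ _ _).symm

lemma chi_pow (m : ℤ) (p : ℕ) : (chi m) ^ p = chi ((p : ℤ) * m) := by
  ext z
  simp only [ContinuousMap.pow_apply, chi, ContinuousMap.coe_mk]
  norm_cast
  rw [mul_comm, zpow_mul, zpow_natCast]

theorem stmt_14 {k : ℕ} (a : Fin (k + 1) → ℤ)
    (ha_pos : ∀ i, 0 < a i) (ha_mono : StrictMono a)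
    (Q : Type*) [NormedRing Q] [StarRing Q] [CStarRing Q]
    [NormedAlgebra ℂ Q] [StarModule ℂ Q] [CompleteSpace Q]
    (α : C(Circle, ℂ) →⋆ₐ[ℂ] C(Circle, Q))
    (B C : Fin (k + 1) → Fin (k + 1) → Q)
    (hα : ∀ i, ∀ z : Circle,
      α (chi (a i)) z
        = ∑ j, ((z ^ (a j) : Circle) : ℂ) • B i j
          + ∑ j, ((z ^ (-(a j)) : Circle) : ℂ) • C i j)
    (hdiag : ∀ i j, j ≠ i → B i j = 0 ∧ C i j = 0)
    (p q : ℕ) (hp : 0 < p) (hq : 0 < q) (i j : Fin (k + 1))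
    (h : (p : ℤ) * a i = (q : ℤ) * a j) :
    B i i ^ p = B j j ^ q ∧ C i i ^ p = C j j ^ q := by
  have hαd : ∀ i (z : Circle), α (chi (a i)) z
      = ((z ^ (a i) : Circle) : ℂ) • B i i + ((z ^ (-(a i)) : Circle) : ℂ) • C i i := by
    intro i z
    rw [hα]
    congr 1
    · exact Finset.sum_eq_single i (fun j _ hj => by rw [(hdiag i j hj).1, smul_zero])
        (fun hni => absurd (Finset.mem_univ i) hni)
    · exact Finset.sum_eq_single i (fun j _ hj => by rw [(hdiag i j hj).2, smul_zero])
        (fun hni => absurd (Finset.mem_univ i) hni)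
  have hpow : (α (chi (a i))) ^ p = (α (chi (a j))) ^ q := by
    rw [← map_pow, ← map_pow, chi_pow, chi_pow, h]
  obtain ⟨D, hD1, hD2, hD3, hD4⟩ := expand_pow (a i) (ha_pos i) (B i i) (C i i) p
  obtain ⟨E, hE1, hE2, hE3, hE4⟩ := expand_pow (a j) (ha_pos j) (B j j) (C j j) q
  rw [← h] at hE1 hE2 hE3 hE4
  have hN0 : 0 ≤ (p : ℤ) * a i := mul_nonneg (Int.natCast_nonneg p) (ha_pos i).le
  have hsum : ∀ z : Circle,
      ∑ n ∈ Finset.Icc (-((p : ℤ) * a i)) ((p : ℤ) * a i), ((z ^ n : Circle) : ℂ) • D n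
        = ∑ n ∈ Finset.Icc (-((p : ℤ) * a i)) ((p : ℤ) * a i), ((z ^ n : Circle) : ℂ) • E n := by
    intro z
    rw [← hD4 z, ← hE4 z, ← hαd i z, ← hαd j z]
    calc α (chi (a i)) z ^ p = ((α (chi (a i))) ^ p) z := by
          simp [ContinuousMap.pow_apply]
      _ = ((α (chi (a j))) ^ q) z := by rw [hpow]
      _ = α (chi (a j)) z ^ q := by simp [ContinuousMap.pow_apply]
  have key : ∀ n ∈ Finset.Icc (-((p : ℤ) * a i)) ((p : ℤ) * a i), D n = E n := by
    intro n hn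
    by_contra hne
    have hx : D n - E n ≠ 0 := sub_ne_zero.mpr hne
    obtain ⟨φ, hφ⟩ := SeparatingDual.exists_ne_zero (R := ℂ) hx
    have h0 : ∀ z : Circle,
        ∑ m ∈ Finset.Icc (-((p : ℤ) * a i)) ((p : ℤ) * a i),
          (φ (D m) - φ (E m)) * ((z ^ m : Circle) : ℂ) = 0 := by
      intro z
      have hz := congrArg φ (hsum z)
      simp only [map_sum, map_smul, smul_eq_mul] at hz
      simp only [sub_mul, Finset.sum_sub_distrib]
      rw [sub_eq_zero]
      simpa [mul_comm] using hz
    have hc := coeff_eq_zero _ _ h0 n hn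
    rw [map_sub] at hφ
    exact hφ (by rw [hc])
  constructor
  · rw [← hD1, ← hE1]
    exact key _ (Finset.mem_Icc.mpr ⟨neg_le_self hN0, le_rfl⟩)
  · rw [← hD2, ← hE2]
    exact key _ (Finset.mem_Icc.mpr ⟨le_rfl, neg_le_self hN0⟩)
end
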